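/- Let Φ : ℝ≥0 → ℝ be twice continuously differentiable and convex, and define ψ(u) = (1/2) ∫₀ᵘ √(Φ''(v)) dv. Then for all u, v ≥ 0, |ψ(u) - ψ(v)|² ≤ (u - v)(Φ'(u) - Φ'(v)). -/

import Mathlib

open Real MeasureTheory intervalIntegral

/-- Cauchy–Schwarz for a nonnegative function on an interval:
`(∫ f)² ≤ (u - v) * ∫ f²`. -/
lemma aux_cs {f : ℝ → ℝ} (hf : Continuous f) (hf0 : ∀ x, 0 ≤ f x)
    {v u : ℝ} (hle : v ≤ u) :
    (∫ x in v..u, f x) ^ 2 ≤ (u - v) * ∫ x in v..u, (f x) ^ 2 := by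
  set μ : Measure ℝ := volume.restrict (Set.Ioc v u) with hμ
  haveI : IsFiniteMeasure μ := by
    constructor
    rw [hμ, Measure.restrict_apply_univ, Real.volume_Ioc]
    exact ENNReal.ofReal_lt_top
  -- boundedness of f on the interval
  obtain ⟨C, hC⟩ : ∃ C, ∀ x ∈ Set.Icc v u, ‖f x‖ ≤ C :=
    (isCompact_Icc).exists_bound_of_continuousOn hf.continuousOn
  have hmem : ∀ p : ENNReal, MemLp f p μ := by
    intro p
    refine MemLp.of_bound (hf.aestronglyMeasurable) C ?_
    rw [hμ, ae_restrict_iff' measurableSet_Ioc]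
    exact Filter.Eventually.of_forall fun x hx => hC x ⟨le_of_lt hx.1, hx.2⟩
  have hone : MemLp (fun _ : ℝ => (1 : ℝ)) (ENNReal.ofReal 2) μ := by
    refine MemLp.of_bound aestronglyMeasurable_const 1 ?_
    filter_upwards with x; simp
  have h2 : (2 : ℝ).HolderConjugate 2 := by
    constructor <;> norm_num
  have hH := MeasureTheory.integral_mul_le_Lp_mul_Lq_of_nonneg h2
    (f := f) (g := fun _ => (1:ℝ)) (μ := μ)
    (Filter.Eventually.of_forall hf0) (Filter.Eventually.of_forall fun _ => zero_le_one)
    (hmem _) hone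
  simp only [mul_one] at hH
  have hμuniv : (μ Set.univ).toReal = u - v := by
    rw [hμ, Measure.restrict_apply_univ, Real.volume_Ioc, ENNReal.toReal_ofReal (by linarith)]
  have hint1 : ∫ _ : ℝ, (1:ℝ) ^ (2:ℝ) ∂μ = u - v := by
    simp [Measure.real, hμuniv]
  rw [hint1] at hH
  -- rewrite interval integrals as set integrals
  have e1 : (∫ x in v..u, f x) = ∫ x, f x ∂μ := by
    rw [intervalIntegral.integral_of_le hle]
  have e2 : (∫ x in v..u, (f x) ^ 2) = ∫ x, f x ^ (2:ℝ) ∂μ := by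
    rw [intervalIntegral.integral_of_le hle]
    refine setIntegral_congr_fun measurableSet_Ioc fun x _ => ?_
    rw [← Real.rpow_natCast (f x) 2]; norm_num
  rw [e1, e2]
  have hA : 0 ≤ ∫ x, f x ^ (2:ℝ) ∂μ :=
    integral_nonneg fun x => Real.rpow_nonneg (hf0 x) _
  have hB : 0 ≤ u - v := by linarith
  have hsq : ((∫ x, f x ^ (2:ℝ) ∂μ) ^ (1/2 : ℝ) * (u - v) ^ (1/2 : ℝ)) ^ 2
      = (∫ x, f x ^ (2:ℝ) ∂μ) * (u - v) := by
    rw [mul_pow, ← Real.rpow_natCast (_ ^ (1/2:ℝ)) 2, ← Real.rpow_natCast ((u-v) ^ (1/2:ℝ)) 2,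
      ← Real.rpow_mul hA, ← Real.rpow_mul hB]
    norm_num
  have hnonneg : 0 ≤ ∫ x, f x ∂μ := integral_nonneg hf0
  calc (∫ x, f x ∂μ) ^ 2
      ≤ ((∫ x, f x ^ (2:ℝ) ∂μ) ^ (1/2 : ℝ) * (u - v) ^ (1/2 : ℝ)) ^ 2 := by
        apply pow_le_pow_left₀ hnonneg hH
    _ = (u - v) * ∫ x, f x ^ (2:ℝ) ∂μ := by rw [hsq]; ring

theorem stmt_0 (Φ : ℝ → ℝ) (hΦ : ContDiff ℝ 2 Φ)
    (hconv : ∀ v : ℝ, 0 ≤ v → 0 ≤ deriv (deriv Φ) v)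
    (ψ : ℝ → ℝ)
    (hψ : ∀ u : ℝ, ψ u = (1/2) * ∫ v in (0:ℝ)..u, Real.sqrt (deriv (deriv Φ) v))
    (u v : ℝ) (hu : 0 ≤ u) (hv : 0 ≤ v) :
    (ψ u - ψ v) ^ 2 ≤ (u - v) * (deriv Φ u - deriv Φ v) := by
  wlog hle : v ≤ u with H
  · have h := H Φ hΦ hconv ψ hψ v u hv hu (le_of_not_ge hle)
    nlinarith [h]
  -- regularity facts
  have hΦ1 : ContDiff ℝ 1 (deriv Φ) := by
    have : ContDiff ℝ (1 + 1 : ℕ) Φ := by exact_mod_cast hΦ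
    exact (contDiff_succ_iff_deriv.mp (by exact_mod_cast this)).2.2
  have hcont2 : Continuous (deriv (deriv Φ)) := hΦ1.continuous_deriv le_rfl
  set g : ℝ → ℝ := fun w => Real.sqrt (deriv (deriv Φ) w) with hgdef
  have hgc : Continuous g := Real.continuous_sqrt.comp hcont2
  -- ψ u - ψ v = (1/2) ∫_v^u g
  have hψdiff : ψ u - ψ v = (1/2) * ∫ x in v..u, g x := by
    rw [hψ u, hψ v, ← mul_sub]
    congr 1
    rw [intervalIntegral.integral_interval_sub_left (hgc.intervalIntegrable 0 u)
      (hgc.intervalIntegrable 0 v)]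
  -- FTC: deriv Φ u - deriv Φ v = ∫_v^u Φ''
  have hftc : deriv Φ u - deriv Φ v = ∫ x in v..u, deriv (deriv Φ) x := by
    rw [intervalIntegral.integral_deriv_eq_sub
      (fun x _ => (hΦ1.differentiable one_ne_zero).differentiableAt)
      (hcont2.intervalIntegrable v u)]
  -- on [v,u], g² = Φ''
  have hsq_eq : (∫ x in v..u, (g x) ^ 2) = ∫ x in v..u, deriv (deriv Φ) x := by
    rw [intervalIntegral.integral_of_le hle, intervalIntegral.integral_of_le hle]
    refine setIntegral_congr_fun measurableSet_Ioc fun x hx => ?_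
    exact Real.sq_sqrt (hconv x (by linarith [hx.1]))
  have hint_nonneg : 0 ≤ ∫ x in v..u, deriv (deriv Φ) x := by
    apply intervalIntegral.integral_nonneg hle
    intro x hx; exact hconv x (by linarith [hx.1])
  have hcs := aux_cs hgc (fun x => Real.sqrt_nonneg _) hle
  rw [hsq_eq] at hcs
  rw [hψdiff, hftc]
  have hB : 0 ≤ u - v := by linarith
  calc ((1/2 : ℝ) * ∫ x in v..u, g x) ^ 2
      = (1/4) * (∫ x in v..u, g x) ^ 2 := by ring
    _ ≤ (1/4) * ((u - v) * ∫ x in v..u, deriv (deriv Φ) x) := by linarith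
    _ ≤ (u - v) * ∫ x in v..u, deriv (deriv Φ) x := by nlinarith [mul_nonneg hB hint_nonneg]
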